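/- Let G be a finite group whose center Z(G) = {1, z} has order 2, and suppose the quotient group G/Z(G) is an elementary abelian 2-group of cardinality 2^{2n} for a positive integer n. Then, up to isomorphism, there is exactly one irreducible complex representation T of G on which z acts as the scalar −1 (i.e., T(z) = −id), and its dimension is 2^n. -/

import Mathlib

open CategoryTheory

section Aux

variable {k G : Type} [Field k] [Group G]

lemma aux_mono_injective {X Y : FDRep k G} (f : X ⟶ Y) [Mono f] :
    Function.Injective f.hom := by
  let F := Action.forget (FGModuleCat k) (MonCat.of G) ⋙ forget₂ (FGModuleCat k) (ModuleCat k)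
  haveI : Mono (F.map f) := F.map_mono f
  exact (ModuleCat.mono_iff_injective (F.map f)).1 this

lemma aux_isIso_of_bijective {X Y : FDRep k G} (f : X ⟶ Y)
    (h : Function.Bijective f.hom) : IsIso f := by
  let e : X.V ≃ₗ[k] Y.V := LinearEquiv.ofBijective f.hom.hom.hom h
  haveI : IsIso f.hom := by
    refine ⟨ObjectProperty.homMk (ModuleCat.ofHom e.symm.toLinearMap), ?_, ?_⟩
    · ext v; exact e.symm_apply_apply v
    · ext v; exact e.apply_symm_apply v
  infer_instance

lemma aux_hom_eq_zero_iff {X Y : FDRep k G} (f : X ⟶ Y) : f = 0 ↔ f.hom = 0 := by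
  constructor
  · rintro rfl; rfl
  · intro h; apply Action.hom_ext; rw [h]; rfl

lemma aux_exists_simple_mono (m : ℕ) (X : FDRep k G) (hm : Module.finrank k X = m)
    (hX : 0 < Module.finrank k X) :
    ∃ (T : FDRep k G) (f : T ⟶ X), Simple T ∧ Mono f := by
  induction m using Nat.strong_induction_on generalizing X with
  | _ m ih =>
    by_cases hs : Simple X
    · exact ⟨X, 𝟙 X, hs, inferInstance⟩
    · have : ¬ (∀ (Y : FDRep k G) (f : Y ⟶ X) (_ : Mono f), IsIso f ↔ f ≠ 0) := by
        intro h
        exact hs ⟨fun {Y} f hf => h Y f hf⟩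
      push_neg at this
      obtain ⟨Y, f, hf, hiff⟩ := this
      haveI := hf
      rcases hiff with ⟨hiso, hf0⟩ | ⟨hiso, hf0⟩
      · exfalso
        have h1 : 𝟙 X = (0 : X ⟶ X) := by
          have h0 : 𝟙 X = inv f ≫ f := by simp
          have h0' : inv f ≫ f = inv f ≫ (0 : Y ⟶ X) := congrArg (fun t => inv f ≫ t) hf0
          rw [h0, h0']; simp
        have h5 : ((Action.Hom.hom (𝟙 X)).hom.hom : X →ₗ[k] X) = (Action.Hom.hom (0 : X ⟶ X)).hom.hom := by
          rw [h1]
        have h2 : ∀ v : X, v = 0 := by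
          intro v
          have h6 := LinearMap.congr_fun h5 v
          simpa using h6
        haveI : Subsingleton X := ⟨fun a b => by rw [h2 a, h2 b]⟩
        rw [Module.finrank_zero_iff.mpr this] at hX
        exact lt_irrefl 0 hX
      · have hinj : Function.Injective f.hom := aux_mono_injective f
        have hle : Module.finrank k Y ≤ Module.finrank k X :=
          LinearMap.finrank_le_finrank_of_injective hinj
        have hlt : Module.finrank k Y < Module.finrank k X := by
          rcases lt_or_eq_of_le hle with h | h
          · exact h
          · exfalso
            apply hiso
            apply aux_isIso_of_bijective
            exact ⟨hinj, (LinearMap.injective_iff_surjective_of_finrank_eq_finrank h).1 hinj⟩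
        have hYpos : 0 < Module.finrank k Y := by
          rw [Module.finrank_pos_iff]
          by_contra hns
          rw [not_nontrivial_iff_subsingleton] at hns
          apply hf0
          rw [aux_hom_eq_zero_iff]
          haveI : Subsingleton Y.V.obj := hns
          apply FGModuleCat.hom_ext
          apply LinearMap.ext
          intro v
          rw [Subsingleton.elim v 0]
          simp
        obtain ⟨T, g, hT, hg⟩ := ih (Module.finrank k Y) (hm ▸ hlt) Y rfl hYpos
        exact ⟨T, g ≫ f, hT, mono_comp g f⟩

lemma aux_finrank_pos_of_simple (X : FDRep k G) [Simple X] :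
    0 < Module.finrank k X := by
  rw [Module.finrank_pos_iff]
  by_contra h
  rw [not_nontrivial_iff_subsingleton] at h
  apply id_nonzero X
  rw [aux_hom_eq_zero_iff]
  haveI : Subsingleton X.V.obj := h
  apply FGModuleCat.hom_ext
  apply LinearMap.ext
  intro v
  rw [Subsingleton.elim v 0]
  simp

end Aux

set_option maxHeartbeats 1000000 in
/-- Let `G` be a finite group whose center is `{1, z}` of order 2, and suppose `G/Z(G)`
is an elementary abelian 2-group of cardinality `2^(2n)` with `n ≥ 1`.  Then up to
isomorphism there is exactly one irreducible complex representation `T` of `G` on which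
`z` acts as `-1`, and its dimension is `2^n`. -/
theorem unique_irrep_center_acts_by_neg_one (n : ℕ) (hn : 0 < n)
    (G : Type) [Group G] [Finite G]
    (z : G) (hz : z ≠ 1)
    (hZ : (Subgroup.center G : Set G) = {1, z})
    (helem : ∀ g : G ⧸ Subgroup.center G, g ^ 2 = 1)
    (hcard : Nat.card (G ⧸ Subgroup.center G) = 2 ^ (2 * n)) :
    ∃ T : FDRep ℂ G, Simple T ∧ T.ρ z = -1 ∧
      Module.finrank ℂ T = 2 ^ n ∧
      ∀ T' : FDRep ℂ G, Simple T' → T'.ρ z = -1 → Nonempty (T ≅ T') := by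
  classical
  letI := Fintype.ofFinite G
  -- basic facts about z
  have hz_mem : z ∈ Subgroup.center G := by
    rw [← SetLike.mem_coe, hZ]; right; rfl
  have hzc : ∀ g : G, g * z = z * g := fun g => Subgroup.mem_center_iff.mp hz_mem g
  have hzz : z * z = 1 := by
    have h2 : z * z ∈ (Subgroup.center G : Set G) :=
      SetLike.mem_coe.mpr ((Subgroup.center G).mul_mem hz_mem hz_mem)
    rw [hZ] at h2
    rcases h2 with h | h
    · exact h
    · exact absurd (mul_left_cancel (a := z) (by rw [h, mul_one])) hz
  have hzinv : z⁻¹ = z := inv_eq_of_mul_eq_one_right hzz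
  -- cardinalities
  have hcardZ : Nat.card (Subgroup.center G) = 2 := by
    have h1 : Nat.card (Subgroup.center G) = Nat.card (({1, z} : Set G)) :=
      Nat.card_congr (Equiv.setCongr hZ)
    rw [h1, Nat.card_coe_set_eq, Set.ncard_pair (fun h => hz h.symm)]
  have hcardG : Nat.card G = 2 ^ (2 * n + 1) := by
    rw [Subgroup.card_eq_card_quotient_mul_card_subgroup (Subgroup.center G),
      hcard, hcardZ, pow_succ]
  have hfcard : (Fintype.card G : ℕ) = 2 ^ (2 * n + 1) := by
    rw [← Nat.card_eq_fintype_card, hcardG]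
  letI : Invertible (Fintype.card G : ℂ) :=
    invertibleOfNonzero (Nat.cast_ne_zero.mpr Fintype.card_ne_zero)
  -- the quotient is commutative
  have hQcomm : ∀ a b : G ⧸ Subgroup.center G, a * b = b * a := by
    intro a b
    have hab : (a * b) * (a * b) = 1 := by rw [← pow_two]; exact helem _
    have ha : a⁻¹ = a := inv_eq_of_mul_eq_one_right (by rw [← pow_two]; exact helem a)
    have hb : b⁻¹ = b := inv_eq_of_mul_eq_one_right (by rw [← pow_two]; exact helem b)
    calc a * b = (a * b)⁻¹ := (inv_eq_of_mul_eq_one_right hab).symm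
    _ = b⁻¹ * a⁻¹ := mul_inv_rev a b
    _ = b * a := by rw [ha, hb]
  -- conjugation of noncentral elements
  have hconj : ∀ g : G, g ∉ Subgroup.center G → ∃ x : G, x * g * x⁻¹ = g * z := by
    intro g hg
    have hnx : ¬ ∀ x : G, x * g = g * x := fun h => hg (Subgroup.mem_center_iff.mpr h)
    push_neg at hnx
    obtain ⟨x, hx⟩ := hnx
    have hcmem : x * g * x⁻¹ * g⁻¹ ∈ Subgroup.center G := by
      rw [← QuotientGroup.eq_one_iff]
      simp only [QuotientGroup.mk_mul, QuotientGroup.mk_inv]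
      rw [hQcomm (x : G ⧸ Subgroup.center G) (g : G ⧸ Subgroup.center G)]
      group
    have hcin : x * g * x⁻¹ * g⁻¹ ∈ ({1, z} : Set G) := by rw [← hZ]; exact hcmem
    rcases hcin with h | h
    · exfalso
      apply hx
      rw [mul_inv_eq_one] at h
      have := congrArg (fun w => w * x) h
      simpa [mul_assoc] using this
    · refine ⟨x, ?_⟩
      rw [Set.mem_singleton_iff] at h
      have h2 : x * g * x⁻¹ = z * g := by
        have := congrArg (fun w => w * g) h
        simpa [mul_assoc] using this
      rw [h2, ← hzc g]
  -- character values
  have charz : ∀ T : FDRep ℂ G, T.ρ z = -1 →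
      T.character z = -(Module.finrank ℂ T : ℂ) := by
    intro T hT
    have hch : T.character z = LinearMap.trace ℂ T (T.ρ z) := rfl
    rw [hch, hT, map_neg, LinearMap.trace_one]
  have char0 : ∀ T : FDRep ℂ G, T.ρ z = -1 →
      ∀ g : G, g ≠ 1 → g ≠ z → T.character g = 0 := by
    intro T hT g hg1 hgz
    have hgnc : g ∉ Subgroup.center G := by
      intro hmem
      have : g ∈ ({1, z} : Set G) := by rw [← hZ]; exact hmem
      rcases this with h | h
      · exact hg1 h
      · exact hgz h
    obtain ⟨x, hx⟩ := hconj g hgnc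
    have h1 : T.character (g * z) = T.character g := by
      rw [← hx]; exact FDRep.char_conj T g x
    have h2 : T.character (g * z) = - T.character g := by
      have hch : T.character (g * z) = LinearMap.trace ℂ T (T.ρ (g * z)) := rfl
      have hch' : T.character g = LinearMap.trace ℂ T (T.ρ g) := rfl
      rw [hch, hch', map_mul, hT, mul_neg_one, map_neg]
    have h3 : T.character g = - T.character g := h1.symm.trans h2
    have h4 : (2 : ℂ) * T.character g = 0 := by linear_combination h3
    simpa using (mul_eq_zero.mp h4).resolve_left two_ne_zero
  -- the sum appearing in the orthogonality relation
  have sumchar : ∀ T T' : FDRep ℂ G, T.ρ z = -1 → T'.ρ z = -1 →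
      ∑ g : G, T.character g * T'.character g⁻¹ =
        2 * (Module.finrank ℂ T : ℂ) * (Module.finrank ℂ T' : ℂ) := by
    intro T T' hT hT'
    have hzero : ∀ g ∈ (Finset.univ : Finset G), g ∉ ({1, z} : Finset G) →
        T.character g * T'.character g⁻¹ = 0 := by
      intro g _ hgnot
      simp only [Finset.mem_insert, Finset.mem_singleton] at hgnot
      push_neg at hgnot
      rw [char0 T hT g hgnot.1 hgnot.2, zero_mul]
    rw [← Finset.sum_subset (Finset.subset_univ ({1, z} : Finset G)) hzero]
    rw [Finset.sum_insert (by simpa using fun h : (1 : G) = z => hz h.symm),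
      Finset.sum_singleton, inv_one, hzinv, FDRep.char_one, FDRep.char_one,
      charz T hT, charz T' hT']
    ring
  -- construct the eigenspace representation E
  let ρreg := Representation.ofMulAction ℂ G G
  have hcommρ : ∀ g : G, ρreg z * ρreg g = ρreg g * ρreg z := by
    intro g
    rw [← map_mul, ← map_mul, ← hzc g]
  let S : Submodule ℂ (MonoidAlgebra ℂ G) := LinearMap.ker (ρreg z + LinearMap.id)
  have hmem : ∀ v, v ∈ S ↔ ρreg z v = -v := by
    intro v
    simp only [S, LinearMap.mem_ker, LinearMap.add_apply, LinearMap.id_apply,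
      add_eq_zero_iff_eq_neg]
  have hinvS : ∀ (g : G) (v : (MonoidAlgebra ℂ G)), v ∈ S → ρreg g v ∈ S := by
    intro g v hv
    rw [hmem] at hv ⊢
    have hcg : ρreg z (ρreg g v) = ρreg g (ρreg z v) := by
      have := congrArg (fun φ => φ v) (hcommρ g)
      simpa using this
    rw [hcg, hv, map_neg]
  let ρE : Representation ℂ G S :=
    { toFun := fun g => (ρreg g).restrict (fun v hv => hinvS g v hv)
      map_one' := by ext v; simp [LinearMap.restrict_apply]
      map_mul' := by intro a b; ext v; simp [LinearMap.restrict_apply] }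
  haveI : FiniteDimensional ℂ (MonoidAlgebra ℂ G) :=
    FiniteDimensional.of_injective ((Finsupp.linearEquivFunOnFinite ℂ ℂ G).toLinearMap ∘ₗ
        (MonoidAlgebra.coeffLinearEquiv (S := ℂ) (M := G) ℂ).toLinearMap)
      ((Finsupp.linearEquivFunOnFinite ℂ ℂ G).injective.comp
        (MonoidAlgebra.coeffLinearEquiv (S := ℂ) (M := G) ℂ).injective)
  haveI : FiniteDimensional ℂ S := inferInstance
  let E : FDRep ℂ G := @FDRep.of ℂ G _ _ S _ _ _ ρE
  have keyE : ∀ v : S, ρE z v = -v := by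
    intro v
    have hv : ρreg z (v : MonoidAlgebra ℂ G) = -(v : MonoidAlgebra ℂ G) := (hmem _).1 v.2
    apply Subtype.ext
    simpa [ρE, LinearMap.restrict_apply] using hv
  have posS : 0 < Module.finrank ℂ S := by
    rw [Module.finrank_pos_iff]
    refine ⟨⟨⟨MonoidAlgebra.single 1 1 - MonoidAlgebra.single z 1, ?_⟩, 0, ?_⟩⟩
    · rw [hmem, map_sub]
      rw [Representation.ofMulAction_single, Representation.ofMulAction_single]
      have hsm1 : z • (1 : G) = z := by simp [smul_eq_mul]
      have hsm2 : z • z = 1 := by simpa [smul_eq_mul] using hzz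
      rw [hsm1, hsm2, neg_sub]
    · intro h
      have h1 := congrArg (fun w : S => (w : MonoidAlgebra ℂ G).coeff 1) h
      simp [MonoidAlgebra.coeff_single, Finsupp.single_apply, hz] at h1
  have hEpos : 0 < Module.finrank ℂ E := posS
  -- find a simple subrepresentation T of E
  obtain ⟨T, f, hTsimple, hTmono⟩ :=
    aux_exists_simple_mono (Module.finrank ℂ E) E rfl hEpos
  haveI := hTsimple
  haveI := hTmono
  have hinj : Function.Injective f.hom := aux_mono_injective f
  have hTz : T.ρ z = -1 := by
    apply LinearMap.ext
    intro v
    apply hinj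
    have hcm := LinearMap.congr_fun (congrArg (fun φ => φ.hom.hom) (f.comm z)) v
    have hE : E.ρ z (f.hom v) = -(f.hom v) := keyE (f.hom v)
    have hneg1 : ((-1 : T →ₗ[ℂ] T)) v = -v := by
      rw [LinearMap.neg_apply, Module.End.one_apply]
    calc f.hom ((T.ρ z) v) = E.ρ z (f.hom v) := hcm
    _ = -(f.hom v) := hE
    _ = f.hom (-v) := (map_neg f.hom.hom.hom v).symm
    _ = f.hom ((-1 : T →ₗ[ℂ] T) v) := by rw [hneg1]
  -- dimension of T
  set d := Module.finrank ℂ T with hd_def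
  letI : Invertible ((Nat.card G : ℂ)) :=
    invertibleOfNonzero (Nat.cast_ne_zero.mpr Nat.card_pos.ne')
  have horth : ⅟(Fintype.card G : ℂ) • ∑ g : G, T.character g * T.character g⁻¹ =
      (if Nonempty (T ≅ T) then (1 : ℂ) else 0) := by
    have := FDRep.char_orthonormal (k := ℂ) (G := G) T T
    rw [smul_eq_mul, invOf_eq_inv, ← Nat.card_eq_fintype_card]; exact this
  rw [if_pos ⟨Iso.refl T⟩] at horth
  rw [sumchar T T hTz hTz] at horth
  have hdc : 2 * (d : ℂ) * d = (Fintype.card G : ℂ) := by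
    have := congrArg (fun t => (Fintype.card G : ℂ) * t) horth
    simp only [smul_eq_mul, ← mul_assoc, mul_invOf_self, one_mul, mul_one] at this
    exact this
  have hnat : 2 * d * d = 2 ^ (2 * n + 1) := by
    have hc2 : ((2 * d * d : ℕ) : ℂ) = ((2 ^ (2 * n + 1) : ℕ) : ℂ) := by
      push_cast
      rw [hdc, hfcard]
      push_cast
      ring
    exact_mod_cast hc2
  have hd : d = 2 ^ n := by
    have h3 : 2 * (d * d) = 2 * 2 ^ (2 * n) := by
      rw [← mul_assoc, hnat, pow_succ, mul_comm]
    have h4 : d * d = 2 ^ (2 * n) := Nat.eq_of_mul_eq_mul_left two_pos h3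
    have h5 : d * d = 2 ^ n * 2 ^ n := by rw [h4, two_mul, pow_add]
    exact Nat.mul_self_inj.mp h5
  refine ⟨T, hTsimple, hTz, hd, ?_⟩
  -- uniqueness
  intro T' hT'simple hT'z
  haveI := hT'simple
  by_contra hne
  have horth2 : ⅟(Fintype.card G : ℂ) • ∑ g : G, T.character g * T'.character g⁻¹ =
      (if Nonempty (T ≅ T') then (1 : ℂ) else 0) := by
    have := FDRep.char_orthonormal (k := ℂ) (G := G) T T'
    rw [smul_eq_mul, invOf_eq_inv, ← Nat.card_eq_fintype_card]; exact this
  rw [if_neg hne, sumchar T T' hTz hT'z] at horth2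
  have hzero : 2 * (d : ℂ) * (Module.finrank ℂ T' : ℂ) = 0 := by
    have := congrArg (fun t => (Fintype.card G : ℂ) * t) horth2
    simp only [smul_eq_mul, ← mul_assoc, mul_invOf_self, one_mul, mul_zero] at this
    exact this
  have hd'pos : 0 < Module.finrank ℂ T' := aux_finrank_pos_of_simple T'
  have : (2 : ℂ) * d * (Module.finrank ℂ T' : ℂ) ≠ 0 := by
    apply mul_ne_zero
    apply mul_ne_zero two_ne_zero
    · exact Nat.cast_ne_zero.mpr (by rw [hd]; positivity)
    · exact Nat.cast_ne_zero.mpr (by omega)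
  exact this hzero
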